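/- arXiv:2404.12116 — 14 statements merged into one kernel-verified Lean document; each statement's English description precedes it below -/
import Mathlib

section
/- Let S be a multiplicative set of a ring R and let a := ass_l(S) = {r ∈ R | sr = 0 for some s ∈ S}. Then S is a left Ore set of R if and only if both of the following hold: (i) for every left ideal L of R with L ⊄ a and every s ∈ S, L ∩ Rs ≠ {0}; and (ii) for every s ∈ S and every r ∈ R \ a, S ∩ (Rs : r) ≠ ∅ (i.e. there exists s' ∈ S with s'r ∈ Rs). -/
/-- Let `S` be a multiplicative set of a ring `R` and let
`a := assₗ(S) = {r ∈ R | s * r = 0 for some s ∈ S}`. Then `S` is a left Ore set of `R`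
iff (i) for every left ideal `L` of `R` with `L ⊄ a` and every `s ∈ S`, `L ∩ Rs ≠ {0}`;
and (ii) for every `s ∈ S` and every `r ∈ R \ a`, `S ∩ (Rs : r) ≠ ∅`. -/
theorem stmt1 {R : Type*} [Ring R] (S : Set R)
    (hone : (1 : R) ∈ S) (hmul : ∀ a ∈ S, ∀ b ∈ S, a * b ∈ S) (hzero : (0 : R) ∉ S) :
    (∀ r : R, ∀ s ∈ S, ∃ s' ∈ S, ∃ r' : R, s' * r = r' * s) ↔
    ((∀ L : Submodule R R, ¬ ((L : Set R) ⊆ {r : R | ∃ s ∈ S, s * r = 0}) →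
        ∀ s ∈ S, ∃ x : R, x ≠ 0 ∧ x ∈ L ∧ ∃ r' : R, x = r' * s) ∧
      (∀ s ∈ S, ∀ r : R, r ∉ {r : R | ∃ t ∈ S, t * r = 0} →
        ∃ s' ∈ S, ∃ r' : R, s' * r = r' * s)) := by
  constructor
  · intro h
    constructor
    · intro L hL s hs
      obtain ⟨r, hrL, hra⟩ := Set.not_subset.mp hL
      obtain ⟨s', hs', r', heq⟩ := h r s hs
      refine ⟨r' * s, ?_, ?_, r', rfl⟩
      · intro h0
        exact hra ⟨s', hs', by rw [heq, h0]⟩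
      · rw [← heq]
        exact L.smul_mem s' hrL
    · intro s hs r _
      exact h r s hs
  · rintro ⟨h1, h2⟩ r s hs
    by_cases hr : r ∈ {r : R | ∃ t ∈ S, t * r = 0}
    · obtain ⟨t, ht, htr⟩ := hr
      exact ⟨t, ht, 0, by simp [htr]⟩
    · exact h2 s hs r hr
end

section
/- Let S be a multiplicative set of a ring R such that every element of S is regular (neither a left nor a right zero divisor). Then S is a left Ore set of R if and only if Rs is an essential left ideal of R for every s ∈ S and S ∩ (Rs : r) ≠ ∅ for every s ∈ S and r ∈ R. Moreover, if these conditions hold then (Rs : r) is an essential left ideal of R for all r ∈ R and s ∈ S. -/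
/-- Let `S` be a multiplicative set of a ring `R` consisting of regular
elements. Then `S` is a left Ore set of `R` iff `Rs` is an essential left ideal of `R` for
every `s ∈ S` and `S ∩ (Rs : r) ≠ ∅` for all `s ∈ S`, `r ∈ R`. Moreover, if these
conditions hold then `(Rs : r)` is an essential left ideal of `R` for all `r ∈ R`, `s ∈ S`.
Left ideals are submodules of `R` as a left module over itself; `Rs = span R {s}`;
a left ideal `L` is essential if `L ⊓ J ≠ ⊥` for every nonzero left ideal `J`. -/
theorem stmt2 {R : Type*} [Ring R] (S : Set R)
    (hone : (1 : R) ∈ S) (hmul : ∀ a ∈ S, ∀ b ∈ S, a * b ∈ S) (hzero : (0 : R) ∉ S)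
    (hreg : ∀ s ∈ S, (∀ r : R, r * s = 0 → r = 0) ∧ (∀ r : R, s * r = 0 → r = 0)) :
    ((∀ r : R, ∀ s ∈ S, ∃ s' ∈ S, ∃ r' : R, s' * r = r' * s) ↔
      ((∀ s ∈ S, ∀ J : Submodule R R, J ≠ ⊥ → Submodule.span R {s} ⊓ J ≠ ⊥) ∧
        (∀ s ∈ S, ∀ r : R, ∃ s' ∈ S, s' * r ∈ Submodule.span R {s}))) ∧
    (((∀ s ∈ S, ∀ J : Submodule R R, J ≠ ⊥ → Submodule.span R {s} ⊓ J ≠ ⊥) ∧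
        (∀ s ∈ S, ∀ r : R, ∃ s' ∈ S, s' * r ∈ Submodule.span R {s})) →
      ∀ s ∈ S, ∀ r : R, ∀ J : Submodule R R, J ≠ ⊥ →
        ∃ x : R, x ≠ 0 ∧ x ∈ J ∧ x * r ∈ Submodule.span R {s}) := by
  constructor
  · constructor
    · intro h
      constructor
      · intro s hs J hJ
        obtain ⟨x, hxJ, hx⟩ := (Submodule.ne_bot_iff J).mp hJ
        obtain ⟨s', hs', r', hr'⟩ := h x s hs
        intro hbot
        have hmem : s' * x ∈ Submodule.span R {s} ⊓ J := by
          refine ⟨?_, ?_⟩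
          · rw [hr']; exact Submodule.mem_span_singleton.mpr ⟨r', rfl⟩
          · exact J.smul_mem s' hxJ
        rw [hbot] at hmem
        exact hx ((hreg s' hs').2 x (by simpa using hmem))
      · intro s hs r
        obtain ⟨s', hs', r', hr'⟩ := h r s hs
        exact ⟨s', hs', by rw [hr']; exact Submodule.mem_span_singleton.mpr ⟨r', rfl⟩⟩
    · rintro ⟨he, hc⟩ r s hs
      obtain ⟨s', hs', hmem⟩ := hc s hs r
      obtain ⟨r', hr'⟩ := Submodule.mem_span_singleton.mp hmem
      exact ⟨s', hs', r', hr'.symm⟩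
  · rintro ⟨he, hc⟩ s hs r J hJ
    obtain ⟨y, hyJ, hy⟩ := (Submodule.ne_bot_iff J).mp hJ
    obtain ⟨s', hs', hmem⟩ := hc s hs (y * r)
    refine ⟨s' * y, fun h0 => hy ((hreg s' hs').2 y h0), J.smul_mem s' hyJ, by rwa [← mul_assoc] at hmem⟩
end

section
/- Let S be a multiplicative set of a ring R such that: (A) for every s ∈ S, the left ideal Rs is an essential left ideal of R; and (B) for every essential left ideal L of R, S ∩ L ≠ ∅. Then S is a left Ore set of R. -/
/-- Let `S` be a multiplicative set of a ring `R` such that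
(A) `Rs` is an essential left ideal for every `s ∈ S`, and
(B) `S` meets every essential left ideal of `R`.
Then `S` is a left Ore set of `R`, i.e. for all `r ∈ R` and `s ∈ S` there exist
`s' ∈ S` and `r' ∈ R` with `s' * r = r' * s`. -/
theorem stmt3 {R : Type*} [Ring R] (S : Set R)
    (hone : (1 : R) ∈ S) (hmul : ∀ a ∈ S, ∀ b ∈ S, a * b ∈ S) (hzero : (0 : R) ∉ S)
    (hA : ∀ s ∈ S, ∀ J : Submodule R R, J ≠ ⊥ → Submodule.span R {s} ⊓ J ≠ ⊥)
    (hB : ∀ L : Submodule R R, (∀ J : Submodule R R, J ≠ ⊥ → L ⊓ J ≠ ⊥) → ∃ s ∈ S, s ∈ L) :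
    ∀ r : R, ∀ s ∈ S, ∃ s' ∈ S, ∃ r' : R, s' * r = r' * s := by
  intro r s hs
  set f : R →ₗ[R] R := LinearMap.toSpanSingleton R R r with hf
  set L : Submodule R R := (Submodule.span R {s}).comap f with hL
  have hess : ∀ J : Submodule R R, J ≠ ⊥ → L ⊓ J ≠ ⊥ := by
    intro J hJ
    by_cases h : J.map f = ⊥
    · -- J ⊆ L
      have hle : J ≤ L := by
        intro x hx
        have : f x ∈ J.map f := Submodule.mem_map_of_mem hx
        rw [h] at this
        simp only [Submodule.mem_bot] at this
        simp [hL, this]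
      rw [inf_eq_right.mpr hle]
      exact hJ
    · have h2 := hA s hs (J.map f) h
      rw [Submodule.ne_bot_iff] at h2 ⊢
      obtain ⟨y, ⟨hy1, hy2⟩, hy0⟩ := h2
      obtain ⟨j, hjJ, hjy⟩ := hy2
      refine ⟨j, ⟨?_, hjJ⟩, ?_⟩
      · show f j ∈ Submodule.span R {s}
        rw [hjy]; exact hy1
      · rintro rfl
        exact hy0 (by rw [← hjy]; simp)
  obtain ⟨s', hs'S, hs'L⟩ := hB L hess
  have : f s' ∈ Submodule.span R {s} := hs'L
  rw [Submodule.mem_span_singleton] at this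
  obtain ⟨r', hr'⟩ := this
  exact ⟨s', hs'S, r', by simpa [hf, LinearMap.toSpanSingleton_apply, smul_eq_mul] using hr'.symm⟩
end

section
/- Let R be a nonzero ring and let 'C_R^{le} be the set of all left regular elements c of R such that Rc is an essential left ideal of R. Then 'C_R^{le} is a multiplicative set of R: it contains 1, does not contain 0, and is closed under multiplication. In particular, if s and t are left regular elements of R such that Rs and Rt are essential left ideals, then st is left regular and R·st is an essential left ideal of R. -/
/-- The set `'C_R^{le}` of left regular elements `c` of `R` such that the left ideal
`Rc = span R {c}` is an essential left ideal of `R`. -/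
def leftRegEss (R : Type*) [Ring R] : Set R :=
  {c : R | (∀ r : R, r * c = 0 → r = 0) ∧
    ∀ J : Submodule R R, J ≠ ⊥ → Submodule.span R {c} ⊓ J ≠ ⊥}

/-- For a nonzero ring `R`, the set `'C_R^{le}` is a multiplicative
set: it contains `1`, does not contain `0`, and is closed under multiplication. -/
theorem stmt4 {R : Type*} [Ring R] [Nontrivial R] :
    (1 : R) ∈ leftRegEss R ∧ (0 : R) ∉ leftRegEss R ∧
    ∀ s ∈ leftRegEss R, ∀ t ∈ leftRegEss R, s * t ∈ leftRegEss R := by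
  refine ⟨⟨fun r hr => by simpa using hr, fun J hJ => ?_⟩, ?_, ?_⟩
  · have : Submodule.span R {(1 : R)} = ⊤ := by
      rw [Submodule.span_singleton_eq_top_iff]
      intro x; exact ⟨x, by simp⟩
    rw [this, top_inf_eq]; exact hJ
  · rintro ⟨hreg, -⟩
    exact one_ne_zero (hreg 1 (by simp))
  · rintro s ⟨hsreg, hse⟩ t ⟨htreg, hte⟩
    refine ⟨fun r hr => ?_, fun J hJ => ?_⟩
    · have := htreg (r * s) (by rw [mul_assoc]; exact hr)
      exact hsreg r this
    · -- find 0 ≠ x ∈ span{t} ⊓ J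
      obtain ⟨x, hx, hx0⟩ := Submodule.ne_bot_iff _ |>.mp (hte J hJ)
      obtain ⟨hx1, hx2⟩ := Submodule.mem_inf.mp hx
      obtain ⟨r, hr⟩ := Submodule.mem_span_singleton.mp hx1
      rw [smul_eq_mul] at hr
      have hr0 : r ≠ 0 := fun h => hx0 (by rw [← hr, h, zero_mul])
      -- Rr ≠ ⊥
      have hRr : Submodule.span R {r} ≠ ⊥ := by
        simp [Submodule.span_singleton_eq_bot, hr0]
      obtain ⟨y, hy, hy0⟩ := Submodule.ne_bot_iff _ |>.mp (hse _ hRr)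
      obtain ⟨hy1, hy2⟩ := Submodule.mem_inf.mp hy
      obtain ⟨b, hb⟩ := Submodule.mem_span_singleton.mp hy1
      obtain ⟨c, hc⟩ := Submodule.mem_span_singleton.mp hy2
      rw [smul_eq_mul] at hb hc
      -- y = b*s = c*r; consider y*t = b*(s*t) = c*(r*t) = c*x
      rw [Submodule.ne_bot_iff]
      refine ⟨y * t, Submodule.mem_inf.mpr ⟨?_, ?_⟩, fun h => hy0 (htreg y h)⟩
      · exact Submodule.mem_span_singleton.mpr ⟨b, by rw [smul_eq_mul, ← mul_assoc, hb]⟩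
      · rw [← hc, mul_assoc, hr]
        exact Submodule.smul_mem _ c hx2
end

section
/- Let R be a nonzero ring and let 'C_R^{le} be the set of all left regular elements c of R such that Rc is an essential left ideal of R. Suppose that 'C_R^{le} meets every essential left ideal of R (i.e. for every essential left ideal L of R, 'C_R^{le} ∩ L ≠ ∅). Then 'C_R^{le} is a left denominator set of R. -/
/-- For a nonzero ring `R`, if `'C_R^{le}` meets every essential left
ideal of `R`, then `'C_R^{le}` is a left denominator set of `R`: it is a multiplicative
set, it satisfies the left Ore condition, and whenever `r * s = 0` with `s ∈ 'C_R^{le}`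
there is `t ∈ 'C_R^{le}` with `t * r = 0`. -/
theorem stmt5 {R : Type*} [Ring R] [Nontrivial R]
    (hmeet : ∀ L : Submodule R R, (∀ J : Submodule R R, J ≠ ⊥ → L ⊓ J ≠ ⊥) →
      ∃ s ∈ leftRegEss R, s ∈ L) :
    (1 : R) ∈ leftRegEss R ∧ (0 : R) ∉ leftRegEss R ∧
    (∀ s ∈ leftRegEss R, ∀ t ∈ leftRegEss R, s * t ∈ leftRegEss R) ∧
    (∀ r : R, ∀ s ∈ leftRegEss R, ∃ s' ∈ leftRegEss R, ∃ r' : R, s' * r = r' * s) ∧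
    (∀ r : R, ∀ s ∈ leftRegEss R, r * s = 0 → ∃ t ∈ leftRegEss R, t * r = 0) := by
  have memspan : ∀ (c x : R), x ∈ Submodule.span R {c} ↔ ∃ a : R, a * c = x := by
    intro c x
    rw [Submodule.mem_span_singleton]
    simp [smul_eq_mul]
  have hone : (1 : R) ∈ leftRegEss R := by
    constructor
    · intro r h; simpa using h
    · intro J hJ
      have htop : Submodule.span R {(1 : R)} = ⊤ :=
        Submodule.eq_top_iff'.mpr fun x => (memspan 1 x).mpr ⟨x, mul_one x⟩
      rw [htop, top_inf_eq]; exact hJ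
  refine ⟨hone, ?_, ?_, ?_, ?_⟩
  · rintro ⟨hreg, -⟩
    exact one_ne_zero (hreg 1 (by simp))
  · rintro s ⟨hs1, hs2⟩ t ⟨ht1, ht2⟩
    refine ⟨fun r h => hs1 r (ht1 _ (by rw [← mul_assoc] at h; exact h)), ?_⟩
    intro J hJ
    obtain ⟨x, hxJ, hx0⟩ := (Submodule.ne_bot_iff _).mp (ht2 J hJ)
    obtain ⟨r, hr⟩ := (memspan t x).mp hxJ.1
    have hr0 : r ≠ 0 := fun h => hx0 (by rw [← hr, h, zero_mul])
    have hRr : Submodule.span R {r} ≠ ⊥ := by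
      simp [Submodule.span_singleton_eq_bot, hr0]
    obtain ⟨y, hy, hy0⟩ := (Submodule.ne_bot_iff _).mp (hs2 _ hRr)
    obtain ⟨b, hb⟩ := (memspan s y).mp hy.1
    obtain ⟨a, ha⟩ := (memspan r y).mp hy.2
    rw [Submodule.ne_bot_iff]
    refine ⟨y * t, ⟨?_, ?_⟩, fun h => hy0 (ht1 y h)⟩
    · exact (memspan _ _).mpr ⟨b, by rw [← hb, mul_assoc]⟩
    · have : y * t = a * x := by rw [← ha, mul_assoc, hr]
      rw [this]
      simpa using J.smul_mem a hxJ.2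
  · rintro r s ⟨hs1, hs2⟩
    set f : R →ₗ[R] R := LinearMap.toSpanSingleton R R r with hf
    have hfa : ∀ a : R, f a = a * r := fun a => rfl
    set L : Submodule R R := Submodule.comap f (Submodule.span R {s}) with hL
    have hLess : ∀ J : Submodule R R, J ≠ ⊥ → L ⊓ J ≠ ⊥ := by
      intro J hJ
      by_cases h : ∀ a ∈ J, a * r = 0
      · have hle : J ≤ L := by
          intro a haJ
          show f a ∈ Submodule.span R {s}
          rw [hfa, h a haJ]
          exact Submodule.zero_mem _
        rwa [inf_eq_right.mpr hle]
      · push_neg at h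
        obtain ⟨a, haJ, har⟩ := h
        have hmap : Submodule.map f J ≠ ⊥ := by
          rw [Submodule.ne_bot_iff]
          exact ⟨a * r, ⟨a, haJ, hfa a⟩, har⟩
        obtain ⟨y, ⟨hys, hymap⟩, hy0⟩ := (Submodule.ne_bot_iff _).mp (hs2 _ hmap)
        obtain ⟨b, hbJ, hb⟩ := hymap
        rw [Submodule.ne_bot_iff]
        refine ⟨b, ⟨?_, hbJ⟩, ?_⟩
        · show f b ∈ Submodule.span R {s}
          rw [hb]; exact hys
        · intro hb0
          apply hy0
          rw [← hb, hb0, map_zero]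
    obtain ⟨s', hs'C, hs'L⟩ := hmeet L hLess
    have : f s' ∈ Submodule.span R {s} := hs'L
    rw [hfa] at this
    obtain ⟨r', hr'⟩ := (memspan s _).mp this
    exact ⟨s', hs'C, r', hr'.symm⟩
  · rintro r s ⟨hs1, hs2⟩ hrs
    refine ⟨1, hone, ?_⟩
    by_contra h
    have hr0 : r ≠ 0 := fun h0 => h (by rw [h0, mul_zero])
    have hRr : Submodule.span R {r} ≠ ⊥ := by
      simp [Submodule.span_singleton_eq_bot, hr0]
    obtain ⟨y, hy, hy0⟩ := (Submodule.ne_bot_iff _).mp (hs2 _ hRr)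
    obtain ⟨a, ha⟩ := (memspan r y).mp hy.2
    apply hy0
    apply hs1
    rw [← ha, mul_assoc, hrs, mul_zero]
end

section
/- Let R be a nonzero ring and let C_R^e be the set of all regular elements c of R such that Rc is an essential left ideal of R and cR is an essential right ideal of R. Suppose that C_R^e meets every essential left ideal of R and every essential right ideal of R. Then C_R^e is both a left denominator set and a right denominator set of R, and ass_l(C_R^e) = ass_r(C_R^e) = 0 (where ass_l(S) := {r ∈ R | sr = 0 for some s ∈ S} and ass_r(S) := {r ∈ R | rs = 0 for some s ∈ S}). -/
section helpers
variable {R : Type*} [Ring R]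

lemma memSpanL {c x : R} : x ∈ Submodule.span R {c} ↔ ∃ a : R, a * c = x := by
  rw [Submodule.mem_span_singleton]
  simp only [smul_eq_mul]

lemma memSpanR {c x : R} : x ∈ Submodule.span Rᵐᵒᵖ {c} ↔ ∃ a : R, c * a = x := by
  rw [Submodule.mem_span_singleton]
  constructor
  · rintro ⟨a, rfl⟩; exact ⟨a.unop, by simp [MulOpposite.smul_eq_mul_unop]⟩
  · rintro ⟨a, rfl⟩; exact ⟨MulOpposite.op a, rfl⟩

lemma nebot_of_mem {M : Type*} [AddCommGroup M] {S : Type*} [Ring S] [Module S M]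
    {N : Submodule S M} {x : M} (hx : x ∈ N) (h0 : x ≠ 0) : N ≠ ⊥ :=
  (Submodule.ne_bot_iff N).2 ⟨x, hx, h0⟩

end helpers



/-- The set `C_R^e` of regular elements `c` of `R` such that the left ideal
`Rc = span R {c}` is an essential left ideal of `R` and the right ideal
`cR = span Rᵐᵒᵖ {c}` is an essential right ideal of `R`.  (Right ideals of `R` are
submodules of `R` viewed as a module over the opposite ring `Rᵐᵒᵖ`.) -/
def regEssBoth (R : Type*) [Ring R] : Set R :=
  {c : R | (∀ r : R, r * c = 0 → r = 0) ∧ (∀ r : R, c * r = 0 → r = 0) ∧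
    (∀ J : Submodule R R, J ≠ ⊥ → Submodule.span R {c} ⊓ J ≠ ⊥) ∧
    (∀ J : Submodule Rᵐᵒᵖ R, J ≠ ⊥ → Submodule.span Rᵐᵒᵖ {c} ⊓ J ≠ ⊥)}

section main
variable {R : Type*} [Ring R]

/-- `1 ∈ regEssBoth R`. -/
lemma one_mem_regEssBoth : (1 : R) ∈ regEssBoth R := by
  refine ⟨fun r h => by simpa using h, fun r h => by simpa using h, ?_, ?_⟩
  · intro J hJ
    obtain ⟨x, hx, hx0⟩ := (Submodule.ne_bot_iff J).1 hJ
    exact nebot_of_mem (Submodule.mem_inf.2 ⟨memSpanL.2 ⟨x, mul_one x⟩, hx⟩) hx0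
  · intro J hJ
    obtain ⟨x, hx, hx0⟩ := (Submodule.ne_bot_iff J).1 hJ
    exact nebot_of_mem (Submodule.mem_inf.2 ⟨memSpanR.2 ⟨x, one_mul x⟩, hx⟩) hx0

lemma mul_mem_regEssBoth {s t : R} (hs : s ∈ regEssBoth R) (ht : t ∈ regEssBoth R) :
    s * t ∈ regEssBoth R := by
  obtain ⟨hs1, hs2, hs3, hs4⟩ := hs
  obtain ⟨ht1, ht2, ht3, ht4⟩ := ht
  refine ⟨fun r h => hs1 r (ht1 _ (by rwa [← mul_assoc] at h)),
    fun r h => ht2 r (hs2 _ (by rwa [mul_assoc] at h)), ?_, ?_⟩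
  · intro J hJ
    obtain ⟨x, hx, hx0⟩ := (Submodule.ne_bot_iff _).1 (ht3 J hJ)
    obtain ⟨hx1, hx2⟩ := Submodule.mem_inf.1 hx
    obtain ⟨r, rfl⟩ := memSpanL.1 hx1
    have hr0 : r ≠ 0 := fun h => hx0 (by simp [h])
    obtain ⟨y, hy, hy0⟩ := (Submodule.ne_bot_iff _).1
      (hs3 (Submodule.span R {r}) (nebot_of_mem (Submodule.mem_span_singleton_self r) hr0))
    obtain ⟨hy1, hy2⟩ := Submodule.mem_inf.1 hy
    obtain ⟨a, ha⟩ := memSpanL.1 hy1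
    obtain ⟨b, hb⟩ := memSpanL.1 hy2
    have hyt0 : y * t ≠ 0 := fun h => hy0 (ht1 y h)
    refine nebot_of_mem (Submodule.mem_inf.2 ⟨?_, ?_⟩) hyt0
    · exact memSpanL.2 ⟨a, by rw [← mul_assoc, ha]⟩
    · have : y * t = b * (r * t) := by rw [← hb, mul_assoc]
      rw [this]; exact J.smul_mem b hx2
  · intro J hJ
    obtain ⟨x, hx, hx0⟩ := (Submodule.ne_bot_iff _).1 (hs4 J hJ)
    obtain ⟨hx1, hx2⟩ := Submodule.mem_inf.1 hx
    obtain ⟨r, rfl⟩ := memSpanR.1 hx1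
    have hr0 : r ≠ 0 := fun h => hx0 (by simp [h])
    obtain ⟨y, hy, hy0⟩ := (Submodule.ne_bot_iff _).1
      (ht4 (Submodule.span Rᵐᵒᵖ {r}) (nebot_of_mem (Submodule.mem_span_singleton_self r) hr0))
    obtain ⟨hy1, hy2⟩ := Submodule.mem_inf.1 hy
    obtain ⟨a, ha⟩ := memSpanR.1 hy1
    obtain ⟨b, hb⟩ := memSpanR.1 hy2
    have hsy0 : s * y ≠ 0 := fun h => hy0 (hs2 y h)
    refine nebot_of_mem (Submodule.mem_inf.2 ⟨?_, ?_⟩) hsy0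
    · exact memSpanR.2 ⟨a, by rw [mul_assoc, ha]⟩
    · have : s * y = (s * r) * b := by rw [← hb, mul_assoc]
      rw [this]
      have := J.smul_mem (MulOpposite.op b) hx2
      simpa [MulOpposite.smul_eq_mul_unop] using this

/-- The left "Ore ideal" `(Rs : r)` is essential when `Rs` is. -/
lemma oreL {s : R} (hs : s ∈ regEssBoth R) (r : R) :
    ∃ L : Submodule R R, (∀ a : R, a ∈ L ↔ a * r ∈ Submodule.span R {s}) ∧
      (∀ J : Submodule R R, J ≠ ⊥ → L ⊓ J ≠ ⊥) := by
  obtain ⟨hs1, hs2, hs3, hs4⟩ := hs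
  set L : Submodule R R :=
    { carrier := {a | a * r ∈ Submodule.span R {s}}
      add_mem' := fun {a b} ha hb => by
        simpa [add_mul] using Submodule.add_mem _ ha hb
      zero_mem' := by simp
      smul_mem' := fun c a ha => by
        simpa [smul_eq_mul, mul_assoc] using
          Submodule.smul_mem (Submodule.span R {s}) c ha } with hLdef
  have hmem : ∀ a : R, a ∈ L ↔ a * r ∈ Submodule.span R {s} := fun a => Iff.rfl
  refine ⟨L, hmem, ?_⟩
  intro J hJ
  obtain ⟨x, hx, hx0⟩ := (Submodule.ne_bot_iff J).1 hJ
  by_cases hxr : x * r = 0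
  · exact nebot_of_mem (Submodule.mem_inf.2 ⟨(hmem x).2 (by simp [hxr]), hx⟩) hx0
  · obtain ⟨y, hy, hy0⟩ := (Submodule.ne_bot_iff _).1
      (hs3 (Submodule.span R {x * r})
        (nebot_of_mem (Submodule.mem_span_singleton_self _) hxr))
    obtain ⟨hy1, hy2⟩ := Submodule.mem_inf.1 hy
    obtain ⟨b, hb⟩ := memSpanL.1 hy2
    have hbx0 : b * x ≠ 0 := fun h => hy0 (by rw [← hb, ← mul_assoc, h, zero_mul])
    refine nebot_of_mem (x := b * x)
      (Submodule.mem_inf.2 ⟨(hmem _).2 ?_, J.smul_mem b hx⟩) hbx0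
    rw [mul_assoc, hb]; exact hy1

/-- The right "Ore ideal" `(sR : r)` is essential when `sR` is. -/
lemma oreR {s : R} (hs : s ∈ regEssBoth R) (r : R) :
    ∃ L : Submodule Rᵐᵒᵖ R, (∀ a : R, a ∈ L ↔ r * a ∈ Submodule.span Rᵐᵒᵖ {s}) ∧
      (∀ J : Submodule Rᵐᵒᵖ R, J ≠ ⊥ → L ⊓ J ≠ ⊥) := by
  obtain ⟨hs1, hs2, hs3, hs4⟩ := hs
  set L : Submodule Rᵐᵒᵖ R :=
    { carrier := {a | r * a ∈ Submodule.span Rᵐᵒᵖ {s}}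
      add_mem' := fun {a b} ha hb => by
        simpa [mul_add] using Submodule.add_mem _ ha hb
      zero_mem' := by simp
      smul_mem' := fun c a ha => by
        have h1 : r * (c • a) = c • (r * a) := by
          rw [MulOpposite.smul_eq_mul_unop, MulOpposite.smul_eq_mul_unop, mul_assoc]
        show r * (c • a) ∈ Submodule.span Rᵐᵒᵖ {s}
        rw [h1]
        exact Submodule.smul_mem (Submodule.span Rᵐᵒᵖ {s}) c ha } with hLdef
  have hmem : ∀ a : R, a ∈ L ↔ r * a ∈ Submodule.span Rᵐᵒᵖ {s} := fun a => Iff.rfl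
  refine ⟨L, hmem, ?_⟩
  intro J hJ
  obtain ⟨x, hx, hx0⟩ := (Submodule.ne_bot_iff J).1 hJ
  by_cases hrx : r * x = 0
  · exact nebot_of_mem (Submodule.mem_inf.2 ⟨(hmem x).2 (by simp [hrx]), hx⟩) hx0
  · obtain ⟨y, hy, hy0⟩ := (Submodule.ne_bot_iff _).1
      (hs4 (Submodule.span Rᵐᵒᵖ {r * x})
        (nebot_of_mem (Submodule.mem_span_singleton_self _) hrx))
    obtain ⟨hy1, hy2⟩ := Submodule.mem_inf.1 hy
    obtain ⟨b, hb⟩ := memSpanR.1 hy2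
    have hxb0 : x * b ≠ 0 := fun h => hy0 (by rw [← hb, mul_assoc, h, mul_zero])
    have hxbJ : x * b ∈ J := by
      have := J.smul_mem (MulOpposite.op b) hx
      simpa [MulOpposite.smul_eq_mul_unop] using this
    refine nebot_of_mem (x := x * b)
      (Submodule.mem_inf.2 ⟨(hmem _).2 ?_, hxbJ⟩) hxb0
    rw [← mul_assoc, hb]; exact hy1

end main

/-- For a nonzero ring `R`, if `C_R^e` meets every essential left ideal
and every essential right ideal of `R`, then `C_R^e` is both a left and a right
denominator set of `R`, and `assₗ(C_R^e) = assᵣ(C_R^e) = 0`. -/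
theorem stmt6 {R : Type*} [Ring R] [Nontrivial R]
    (hmeetL : ∀ L : Submodule R R, (∀ J : Submodule R R, J ≠ ⊥ → L ⊓ J ≠ ⊥) →
      ∃ s ∈ regEssBoth R, s ∈ L)
    (hmeetR : ∀ L : Submodule Rᵐᵒᵖ R, (∀ J : Submodule Rᵐᵒᵖ R, J ≠ ⊥ → L ⊓ J ≠ ⊥) →
      ∃ s ∈ regEssBoth R, s ∈ L) :
    (1 : R) ∈ regEssBoth R ∧ (0 : R) ∉ regEssBoth R ∧
    (∀ s ∈ regEssBoth R, ∀ t ∈ regEssBoth R, s * t ∈ regEssBoth R) ∧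
    -- left Ore and left denominator conditions
    (∀ r : R, ∀ s ∈ regEssBoth R, ∃ s' ∈ regEssBoth R, ∃ r' : R, s' * r = r' * s) ∧
    (∀ r : R, ∀ s ∈ regEssBoth R, r * s = 0 → ∃ t ∈ regEssBoth R, t * r = 0) ∧
    -- right Ore and right denominator conditions
    (∀ r : R, ∀ s ∈ regEssBoth R, ∃ s' ∈ regEssBoth R, ∃ r' : R, r * s' = s * r') ∧
    (∀ r : R, ∀ s ∈ regEssBoth R, s * r = 0 → ∃ t ∈ regEssBoth R, r * t = 0) ∧
    -- `assₗ = assᵣ = 0`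
    {r : R | ∃ s ∈ regEssBoth R, s * r = 0} = {0} ∧
    {r : R | ∃ s ∈ regEssBoth R, r * s = 0} = {0} := by
  refine ⟨one_mem_regEssBoth, fun h => one_ne_zero (h.1 1 (mul_zero 1)),
    fun s hs t ht => mul_mem_regEssBoth hs ht, ?_, ?_, ?_, ?_, ?_, ?_⟩
  · intro r s hs
    obtain ⟨L, hmem, hess⟩ := oreL hs r
    obtain ⟨s', hs', hsL⟩ := hmeetL L hess
    obtain ⟨r', hr'⟩ := memSpanL.1 ((hmem s').1 hsL)
    exact ⟨s', hs', r', hr'.symm⟩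
  · intro r s hs h
    exact ⟨1, one_mem_regEssBoth, by rw [one_mul, hs.1 r h]⟩
  · intro r s hs
    obtain ⟨L, hmem, hess⟩ := oreR hs r
    obtain ⟨s', hs', hsL⟩ := hmeetR L hess
    obtain ⟨r', hr'⟩ := memSpanR.1 ((hmem s').1 hsL)
    exact ⟨s', hs', r', hr'.symm⟩
  · intro r s hs h
    exact ⟨1, one_mem_regEssBoth, by rw [mul_one, hs.2.1 r h]⟩
  · ext x
    simp only [Set.mem_setOf_eq, Set.mem_singleton_iff]
    exact ⟨fun ⟨s, hs, h⟩ => hs.2.1 x h, fun h => ⟨1, one_mem_regEssBoth, by rw [h, mul_zero]⟩⟩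
  · ext x
    simp only [Set.mem_setOf_eq, Set.mem_singleton_iff]
    exact ⟨fun ⟨s, hs, h⟩ => hs.1 x h, fun h => ⟨1, one_mem_regEssBoth, by rw [h, zero_mul]⟩⟩
end

section
/- Let S be a multiplicative set of a ring R. Then S contains a largest left Ore set of R: there exists a left Ore set S^{lO} of R with S^{lO} ⊆ S such that every left Ore set T of R with T ⊆ S satisfies T ⊆ S^{lO}. -/
/-- A left Ore set of a ring `R`: a multiplicative set (`1 ∈ S`, `S·S ⊆ S`, `0 ∉ S`)
satisfying the left Ore condition. -/
def IsLeftOreSet {R : Type*} [Ring R] (S : Set R) : Prop :=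
  (1 : R) ∈ S ∧ (∀ a ∈ S, ∀ b ∈ S, a * b ∈ S) ∧ (0 : R) ∉ S ∧
  ∀ r : R, ∀ s ∈ S, ∃ s' ∈ S, ∃ r' : R, s' * r = r' * s

/-- Every multiplicative set `S` of a ring `R` contains a largest
left Ore set of `R`. -/
theorem stmt7 {R : Type*} [Ring R] (S : Set R)
    (hone : (1 : R) ∈ S) (hmul : ∀ a ∈ S, ∀ b ∈ S, a * b ∈ S) (hzero : (0 : R) ∉ S) :
    ∃ T : Set R, T ⊆ S ∧ IsLeftOreSet T ∧
      ∀ T' : Set R, T' ⊆ S → IsLeftOreSet T' → T' ⊆ T := by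
  set U : Set R := ⋃₀ {T' : Set R | T' ⊆ S ∧ IsLeftOreSet T'} with hU
  set T : Set R := ((Submonoid.closure U : Submonoid R) : Set R) with hT
  have hTS : T ⊆ S := by
    intro x hx
    induction hx using Submonoid.closure_induction with
    | mem y hy => obtain ⟨T', ⟨h1, _⟩, hy⟩ := hy; exact h1 hy
    | one => exact hone
    | mul a b _ _ ha hb => exact hmul a ha b hb
  refine ⟨T, hTS, ⟨Submonoid.one_mem _, fun a ha b hb => Submonoid.mul_mem _ ha hb,
    fun h => hzero (hTS h), ?_⟩, ?_⟩
  · intro r s hs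
    induction hs using Submonoid.closure_induction generalizing r with
    | mem y hy =>
      obtain ⟨T', ⟨h1, h2⟩, hy⟩ := hy
      obtain ⟨s', hs', r', h⟩ := h2.2.2.2 r y hy
      exact ⟨s', Submonoid.subset_closure ⟨T', ⟨h1, h2⟩, hs'⟩, r', h⟩
    | one => exact ⟨1, Submonoid.one_mem _, r, by rw [one_mul, mul_one]⟩
    | mul a b _ _ ha hb =>
      obtain ⟨s₁, hs₁, r₁, h₁⟩ := hb r
      obtain ⟨s₂, hs₂, r₂, h₂⟩ := ha r₁
      exact ⟨s₂ * s₁, Submonoid.mul_mem _ hs₂ hs₁, r₂, by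
        rw [mul_assoc, h₁, ← mul_assoc, h₂, mul_assoc]⟩
  · intro T' hT'S hT'Ore x hx
    exact Submonoid.subset_closure ⟨T', ⟨hT'S, hT'Ore⟩, hx⟩
end

section
/- Let S be a multiplicative set of a ring R. Then S contains a largest left denominator set of R: there exists a left denominator set S^{ld} of R with S^{ld} ⊆ S such that every left denominator set T of R with T ⊆ S satisfies T ⊆ S^{ld}. -/
/-- A left denominator set of a ring `R`: a multiplicative set (`1 ∈ S`, `S·S ⊆ S`,
`0 ∉ S`) satisfying the left Ore condition and such that `r * s = 0` with `s ∈ S`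
implies `t * r = 0` for some `t ∈ S`. -/
def IsLeftDenominatorSet {R : Type*} [Ring R] (S : Set R) : Prop :=
  (1 : R) ∈ S ∧ (∀ a ∈ S, ∀ b ∈ S, a * b ∈ S) ∧ (0 : R) ∉ S ∧
  (∀ r : R, ∀ s ∈ S, ∃ s' ∈ S, ∃ r' : R, s' * r = r' * s) ∧
  (∀ r : R, ∀ s ∈ S, r * s = 0 → ∃ t ∈ S, t * r = 0)

/-- Every multiplicative set `S` of a ring `R` contains a largest
left denominator set of `R`. -/
theorem stmt8 {R : Type*} [Ring R] (S : Set R)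
    (hone : (1 : R) ∈ S) (hmul : ∀ a ∈ S, ∀ b ∈ S, a * b ∈ S) (hzero : (0 : R) ∉ S) :
    ∃ T : Set R, T ⊆ S ∧ IsLeftDenominatorSet T ∧
      ∀ T' : Set R, T' ⊆ S → IsLeftDenominatorSet T' → T' ⊆ T := by
  classical
  set gen : Set R := ⋃ T' ∈ {T' : Set R | T' ⊆ S ∧ IsLeftDenominatorSet T'}, T' with hgen
  let M : Submonoid R := ⟨⟨S, fun {a b} ha hb => hmul a ha b hb⟩, hone⟩
  set T : Submonoid R := Submonoid.closure gen with hT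
  have hgenS : gen ⊆ S := by
    intro x hx
    simp only [hgen, Set.mem_iUnion, Set.mem_setOf_eq] at hx
    obtain ⟨T', ⟨hsub, _⟩, hxT⟩ := hx
    exact hsub hxT
  have hTS : (T : Set R) ⊆ S := by
    have h : T ≤ M := Submonoid.closure_le.mpr hgenS
    exact fun x hx => h hx
  have ore : ∀ s ∈ T, ∀ r : R, ∃ s' ∈ (T : Set R), ∃ r', s' * r = r' * s := by
    intro s hs
    induction hs using Submonoid.closure_induction with
    | mem x hx =>
      simp only [hgen, Set.mem_iUnion, Set.mem_setOf_eq] at hx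
      obtain ⟨T', hT'mem, hxT⟩ := hx
      intro r
      obtain ⟨s', hs', r', hr'⟩ := hT'mem.2.2.2.2.1 r x hxT
      exact ⟨s', Submonoid.subset_closure (Set.mem_iUnion.mpr
        ⟨T', Set.mem_iUnion.mpr ⟨hT'mem, hs'⟩⟩), r', hr'⟩
    | one => exact fun r => ⟨1, T.one_mem, r, by simp⟩
    | mul a b ha hb iha ihb =>
      intro r
      obtain ⟨s₂, hs₂, r₂, h₂⟩ := ihb r
      obtain ⟨s₁, hs₁, r₁, h₁⟩ := iha r₂
      refine ⟨s₁ * s₂, T.mul_mem hs₁ hs₂, r₁, ?_⟩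
      calc s₁ * s₂ * r = s₁ * (s₂ * r) := by rw [mul_assoc]
        _ = s₁ * (r₂ * b) := by rw [h₂]
        _ = (s₁ * r₂) * b := by rw [mul_assoc]
        _ = (r₁ * a) * b := by rw [h₁]
        _ = r₁ * (a * b) := by rw [mul_assoc]
  have ann : ∀ s ∈ T, ∀ r : R, r * s = 0 → ∃ t ∈ (T : Set R), t * r = 0 := by
    intro s hs
    induction hs using Submonoid.closure_induction with
    | mem x hx =>
      simp only [hgen, Set.mem_iUnion, Set.mem_setOf_eq] at hx
      obtain ⟨T', hT'mem, hxT⟩ := hx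
      intro r hr
      obtain ⟨t, ht, htr⟩ := hT'mem.2.2.2.2.2 r x hxT hr
      exact ⟨t, Submonoid.subset_closure (Set.mem_iUnion.mpr
        ⟨T', Set.mem_iUnion.mpr ⟨hT'mem, ht⟩⟩), htr⟩
    | one => exact fun r hr => ⟨1, T.one_mem, by simpa using hr⟩
    | mul a b ha hb iha ihb =>
      intro r hr
      have hra : (r * a) * b = 0 := by rw [mul_assoc]; exact hr
      obtain ⟨t', ht', h't⟩ := ihb (r * a) hra
      have : (t' * r) * a = 0 := by rw [mul_assoc]; exact h't
      obtain ⟨t, ht, hta⟩ := iha (t' * r) this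
      exact ⟨t * t', T.mul_mem ht ht', by rw [mul_assoc]; exact hta⟩
  refine ⟨T, hTS, ⟨T.one_mem, fun a ha b hb => T.mul_mem ha hb,
      fun h => hzero (hTS h), fun r s hs => ore s hs r, fun r s hs => ann s hs r⟩, ?_⟩
  intro T' hT'S hT'den x hx
  exact Submonoid.subset_closure (Set.mem_iUnion.mpr
    ⟨T', Set.mem_iUnion.mpr ⟨⟨hT'S, hT'den⟩, hx⟩⟩)
end

section
/- Let R be a ring, a an ideal of R, and π : R → R̄ := R/a the canonical projection. Let b̄ be an ideal of R̄ and b := π⁻¹(b̄). Let S̄ be a multiplicative set of R̄ and S := π⁻¹(S̄). If S̄ is a left Ore set of R̄ with ass_l(S̄) = b̄, and ass_l(S) = b, then S is a left Ore set of R with ass_l(S) = b. -/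
/-- Let `π : R → R̄ = R/a` be the canonical projection onto a quotient
ring (modelled as a surjective ring homomorphism).  Let `b̄` be a (two-sided) ideal of
`R̄`, `b := π⁻¹(b̄)`, `S̄` a multiplicative set of `R̄` and `S := π⁻¹(S̄)`.  If `S̄` is a
left Ore set of `R̄` with `assₗ(S̄) = b̄`, and `assₗ(S) = b`, then `S` is a left Ore set
of `R` with `assₗ(S) = b`. -/
theorem stmt11 {R Rbar : Type*} [Ring R] [Ring Rbar]
    (π : R →+* Rbar) (hπ : Function.Surjective π)
    (bbar : Set Rbar)
    (hb0 : (0 : Rbar) ∈ bbar) (hbadd : ∀ x ∈ bbar, ∀ y ∈ bbar, x + y ∈ bbar)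
    (hbneg : ∀ x ∈ bbar, -x ∈ bbar)
    (hbl : ∀ r : Rbar, ∀ x ∈ bbar, r * x ∈ bbar)
    (hbr : ∀ r : Rbar, ∀ x ∈ bbar, x * r ∈ bbar)
    (Sbar : Set Rbar)
    (hone : (1 : Rbar) ∈ Sbar) (hmul : ∀ a ∈ Sbar, ∀ b ∈ Sbar, a * b ∈ Sbar)
    (hzero : (0 : Rbar) ∉ Sbar)
    (hOre : ∀ r : Rbar, ∀ s ∈ Sbar, ∃ s' ∈ Sbar, ∃ r' : Rbar, s' * r = r' * s)
    (hassbar : {r : Rbar | ∃ s ∈ Sbar, s * r = 0} = bbar)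
    (hass : {r : R | ∃ s ∈ π ⁻¹' Sbar, s * r = 0} = π ⁻¹' bbar) :
    ((1 : R) ∈ π ⁻¹' Sbar ∧ (∀ a ∈ π ⁻¹' Sbar, ∀ b ∈ π ⁻¹' Sbar, a * b ∈ π ⁻¹' Sbar) ∧
      (0 : R) ∉ π ⁻¹' Sbar ∧
      (∀ r : R, ∀ s ∈ π ⁻¹' Sbar, ∃ s' ∈ π ⁻¹' Sbar, ∃ r' : R, s' * r = r' * s)) ∧
    {r : R | ∃ s ∈ π ⁻¹' Sbar, s * r = 0} = π ⁻¹' bbar := by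
  refine ⟨⟨?_, ?_, ?_, ?_⟩, hass⟩
  · simp [Set.mem_preimage, map_one, hone]
  · intro a ha b hb
    simp only [Set.mem_preimage, map_mul] at *
    exact hmul _ ha _ hb
  · simp only [Set.mem_preimage, map_zero]; exact hzero
  · intro r s hs
    obtain ⟨sb', hsb', rb', heq⟩ := hOre (π r) (π s) hs
    obtain ⟨s', hs'⟩ := hπ sb'
    obtain ⟨r₀, hr₀⟩ := hπ rb'
    have hker : s' * r - r₀ * s ∈ π ⁻¹' bbar := by
      have : π (s' * r - r₀ * s) = 0 := by
        simp [map_sub, map_mul, hs', hr₀, heq]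
      simp [Set.mem_preimage, this, hb0]
    rw [← hass] at hker
    obtain ⟨t, ht, htz⟩ := hker
    refine ⟨t * s', ?_, t * r₀, ?_⟩
    · simp only [Set.mem_preimage, map_mul] at *
      exact hmul _ ht _ (hs' ▸ hsb')
    · have key : t * (s' * r) - t * (r₀ * s) = 0 := by rw [← mul_sub]; exact htz
      rw [mul_assoc, mul_assoc]
      exact sub_eq_zero.mp key
end

section
/- Let R be a ring, a an ideal of R, and π : R → R̄ := R/a the canonical projection. Let b̄ be an ideal of R̄ and b := π⁻¹(b̄). Let S̄ be a multiplicative set of R̄ and S := π⁻¹(S̄). If S̄ is a left denominator set of R̄ with ass_l(S̄) = b̄, and ass_l(S) = b, then S is a left denominator set of R with ass_l(S) = b (in particular ass_r(S) := {r ∈ R | rs = 0 for some s ∈ S} is contained in b). -/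
/-- Let `π : R → R̄ = R/a` be the canonical projection onto a quotient
ring (modelled as a surjective ring homomorphism).  Let `b̄` be a (two-sided) ideal of
`R̄`, `b := π⁻¹(b̄)`, `S̄` a multiplicative set of `R̄` and `S := π⁻¹(S̄)`.  If `S̄` is a
left denominator set of `R̄` with `assₗ(S̄) = b̄`, and `assₗ(S) = b`, then `S` is a left
denominator set of `R` with `assₗ(S) = b`; in particular
`assᵣ(S) = {r | r * s = 0 for some s ∈ S} ⊆ b`. -/
theorem stmt12 {R Rbar : Type*} [Ring R] [Ring Rbar]
    (π : R →+* Rbar) (hπ : Function.Surjective π)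
    (bbar : Set Rbar)
    (hb0 : (0 : Rbar) ∈ bbar) (hbadd : ∀ x ∈ bbar, ∀ y ∈ bbar, x + y ∈ bbar)
    (hbneg : ∀ x ∈ bbar, -x ∈ bbar)
    (hbl : ∀ r : Rbar, ∀ x ∈ bbar, r * x ∈ bbar)
    (hbr : ∀ r : Rbar, ∀ x ∈ bbar, x * r ∈ bbar)
    (Sbar : Set Rbar)
    (hone : (1 : Rbar) ∈ Sbar) (hmul : ∀ a ∈ Sbar, ∀ b ∈ Sbar, a * b ∈ Sbar)
    (hzero : (0 : Rbar) ∉ Sbar)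
    (hOre : ∀ r : Rbar, ∀ s ∈ Sbar, ∃ s' ∈ Sbar, ∃ r' : Rbar, s' * r = r' * s)
    (hden : ∀ r : Rbar, ∀ s ∈ Sbar, r * s = 0 → ∃ t ∈ Sbar, t * r = 0)
    (hassbar : {r : Rbar | ∃ s ∈ Sbar, s * r = 0} = bbar)
    (hass : {r : R | ∃ s ∈ π ⁻¹' Sbar, s * r = 0} = π ⁻¹' bbar) :
    ((1 : R) ∈ π ⁻¹' Sbar ∧ (∀ a ∈ π ⁻¹' Sbar, ∀ b ∈ π ⁻¹' Sbar, a * b ∈ π ⁻¹' Sbar) ∧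
      (0 : R) ∉ π ⁻¹' Sbar ∧
      (∀ r : R, ∀ s ∈ π ⁻¹' Sbar, ∃ s' ∈ π ⁻¹' Sbar, ∃ r' : R, s' * r = r' * s) ∧
      (∀ r : R, ∀ s ∈ π ⁻¹' Sbar, r * s = 0 → ∃ t ∈ π ⁻¹' Sbar, t * r = 0)) ∧
    {r : R | ∃ s ∈ π ⁻¹' Sbar, s * r = 0} = π ⁻¹' bbar ∧
    {r : R | ∃ s ∈ π ⁻¹' Sbar, r * s = 0} ⊆ π ⁻¹' bbar := by
  have key : ∀ x : R, π x ∈ bbar → ∃ t ∈ π ⁻¹' Sbar, t * x = 0 := by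
    intro x hx
    have : x ∈ {r : R | ∃ s ∈ π ⁻¹' Sbar, s * r = 0} := by rw [hass]; exact hx
    exact this
  refine ⟨⟨?_, ?_, ?_, ?_, ?_⟩, hass, ?_⟩
  · simp [Set.mem_preimage, map_one, hone]
  · intro a ha b hb
    simp only [Set.mem_preimage, map_mul]
    exact hmul _ ha _ hb
  · simp only [Set.mem_preimage, map_zero]; exact hzero
  · intro r s hs
    obtain ⟨sb, hsb, rb, heq⟩ := hOre (π r) (π s) hs
    obtain ⟨s0, hs0⟩ := hπ sb
    obtain ⟨r0, hr0⟩ := hπ rb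
    have : π (s0 * r - r0 * s) ∈ bbar := by
      simp [map_sub, map_mul, hs0, hr0, heq, hb0]
    obtain ⟨t, ht, htz⟩ := key _ this
    refine ⟨t * s0, ?_, t * r0, ?_⟩
    · simp only [Set.mem_preimage, map_mul, hs0]
      exact hmul _ ht _ hsb
    · have : t * (s0 * r - r0 * s) = 0 := htz
      rw [mul_sub, sub_eq_zero] at this
      rw [mul_assoc, mul_assoc]
      exact this
  · intro r s hs hrs
    have : π r * π s = 0 := by rw [← map_mul, hrs, map_zero]
    obtain ⟨tb, htb, htz⟩ := hden (π r) (π s) hs this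
    have : π r ∈ bbar := by rw [← hassbar]; exact ⟨tb, htb, htz⟩
    obtain ⟨t, ht, htz'⟩ := key _ this
    exact ⟨t, ht, htz'⟩
  · rintro r ⟨s, hs, hrs⟩
    have : π r * π s = 0 := by rw [← map_mul, hrs, map_zero]
    obtain ⟨tb, htb, htz⟩ := hden (π r) (π s) hs this
    show π r ∈ bbar
    rw [← hassbar]; exact ⟨tb, htb, htz⟩
end

section
/- Let R be a ring and let S be a left Ore set of R with ass_l(S) = a (then a is an ideal of R). Then the set S + a := {s + x | s ∈ S, x ∈ a} is a left Ore set of R with ass_l(S + a) = a. -/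
/-- Let `S` be a left Ore set of a ring `R` with
`a = assₗ(S) := {r | s * r = 0 for some s ∈ S}`.  Then `S + a` is a left Ore set of `R`
with `assₗ(S + a) = a`. -/
theorem stmt13 {R : Type*} [Ring R] (S : Set R)
    (hone : (1 : R) ∈ S) (hmul : ∀ a ∈ S, ∀ b ∈ S, a * b ∈ S) (hzero : (0 : R) ∉ S)
    (hOre : ∀ r : R, ∀ s ∈ S, ∃ s' ∈ S, ∃ r' : R, s' * r = r' * s)
    (a : Set R) (ha : a = {r : R | ∃ s ∈ S, s * r = 0})
    (T : Set R) (hT : T = {x : R | ∃ s ∈ S, ∃ y ∈ a, x = s + y}) :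
    (1 : R) ∈ T ∧ (∀ u ∈ T, ∀ v ∈ T, u * v ∈ T) ∧ (0 : R) ∉ T ∧
    (∀ r : R, ∀ s ∈ T, ∃ s' ∈ T, ∃ r' : R, s' * r = r' * s) ∧
    {r : R | ∃ s ∈ T, s * r = 0} = a := by
  have h0a : (0 : R) ∈ a := by rw [ha]; exact ⟨1, hone, by simp⟩
  have hST : S ⊆ T := by
    intro s hs
    rw [hT]
    exact ⟨s, hs, 0, h0a, by simp⟩
  have hra : ∀ x ∈ a, ∀ r : R, r * x ∈ a := by
    intro x hx r
    rw [ha] at hx ⊢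
    obtain ⟨u, hu, hux⟩ := hx
    obtain ⟨s', hs', r', h⟩ := hOre r u hu
    exact ⟨s', hs', by rw [← mul_assoc, h, mul_assoc, hux, mul_zero]⟩
  have har : ∀ x ∈ a, ∀ r : R, x * r ∈ a := by
    intro x hx r
    rw [ha] at hx ⊢
    obtain ⟨u, hu, hux⟩ := hx
    exact ⟨u, hu, by rw [← mul_assoc, hux, zero_mul]⟩
  have haa : ∀ x ∈ a, ∀ y ∈ a, x + y ∈ a := by
    intro x hx y hy
    rw [ha] at hx hy ⊢
    obtain ⟨u, hu, hux⟩ := hx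
    obtain ⟨v, hv, hvy⟩ := hy
    obtain ⟨s', hs', r', h⟩ := hOre u v hv
    refine ⟨s' * u, hmul _ hs' _ hu, ?_⟩
    rw [mul_add, mul_assoc, hux, mul_zero, zero_add, h, mul_assoc, hvy, mul_zero]
  have hneg : ∀ x ∈ a, -x ∈ a := by
    intro x hx
    rw [ha] at hx ⊢
    obtain ⟨u, hu, hux⟩ := hx
    exact ⟨u, hu, by rw [mul_neg, hux, neg_zero]⟩
  refine ⟨hST hone, ?_, ?_, ?_, ?_⟩
  · -- multiplicative closure
    intro u hu v hv
    rw [hT] at hu hv ⊢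
    obtain ⟨s, hs, x, hx, rfl⟩ := hu
    obtain ⟨t, ht, y, hy, rfl⟩ := hv
    refine ⟨s * t, hmul _ hs _ ht, s * y + (x * t + x * y),
      haa _ (hra y hy s) _ (haa _ (har x hx t) _ (har x hx y)), by noncomm_ring⟩
  · -- 0 ∉ T
    intro h
    rw [hT] at h
    obtain ⟨s, hs, y, hy, h0⟩ := h
    have hsa : s ∈ a := by
      have : s = -y := eq_neg_of_add_eq_zero_left h0.symm
      rw [this]; exact hneg y hy
    rw [ha] at hsa
    obtain ⟨u, hu, hus⟩ := hsa
    exact hzero (hus ▸ hmul _ hu _ hs)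
  · -- Ore condition for T
    intro r t ht
    rw [hT] at ht
    obtain ⟨s, hs, y, hy, rfl⟩ := ht
    rw [ha] at hy
    obtain ⟨v, hv, hvy⟩ := hy
    obtain ⟨s', hs', r'', h⟩ := hOre r (v * s) (hmul _ hv _ hs)
    refine ⟨s', hST hs', r'' * v, ?_⟩
    rw [h, mul_add, mul_assoc, mul_assoc, hvy, mul_zero, add_zero]
  · -- ass(T) = a
    ext r
    constructor
    · rintro ⟨t, ht, htr⟩
      rw [hT] at ht
      obtain ⟨s, hs, y, hy, rfl⟩ := ht
      rw [ha] at hy ⊢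
      obtain ⟨v, hv, hvy⟩ := hy
      refine ⟨v * s, hmul _ hv _ hs, ?_⟩
      rw [show v * s = v * (s + y) by rw [mul_add, hvy, add_zero],
        mul_assoc, htr, mul_zero]
    · intro hr
      have hr' := hr
      rw [ha] at hr'
      obtain ⟨u, hu, h⟩ := hr'
      exact ⟨u, hST hu, h⟩
end

section
/- Let R be a ring and let S be a left denominator set of R with ass_l(S) = a. Then the set S + a := {s + x | s ∈ S, x ∈ a} is a left denominator set of R with ass_l(S + a) = a. -/
/-- Let `S` be a left denominator set of a ring `R` with
`a = assₗ(S) := {r | s * r = 0 for some s ∈ S}`.  Then `S + a` is a left denominator set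
of `R` with `assₗ(S + a) = a`. -/
theorem stmt14 {R : Type*} [Ring R] (S : Set R)
    (hone : (1 : R) ∈ S) (hmul : ∀ a ∈ S, ∀ b ∈ S, a * b ∈ S) (hzero : (0 : R) ∉ S)
    (hOre : ∀ r : R, ∀ s ∈ S, ∃ s' ∈ S, ∃ r' : R, s' * r = r' * s)
    (hden : ∀ r : R, ∀ s ∈ S, r * s = 0 → ∃ t ∈ S, t * r = 0)
    (a : Set R) (ha : a = {r : R | ∃ s ∈ S, s * r = 0})
    (T : Set R) (hT : T = {x : R | ∃ s ∈ S, ∃ y ∈ a, x = s + y}) :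
    (1 : R) ∈ T ∧ (∀ u ∈ T, ∀ v ∈ T, u * v ∈ T) ∧ (0 : R) ∉ T ∧
    (∀ r : R, ∀ s ∈ T, ∃ s' ∈ T, ∃ r' : R, s' * r = r' * s) ∧
    (∀ r : R, ∀ s ∈ T, r * s = 0 → ∃ t ∈ T, t * r = 0) ∧
    {r : R | ∃ s ∈ T, s * r = 0} = a := by
  subst ha; subst hT
  -- `a` is closed under right multiplication
  have aR : ∀ x r : R, (∃ s ∈ S, s * x = 0) → ∃ s ∈ S, s * (x * r) = 0 := by
    rintro x r ⟨s, hs, h⟩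
    exact ⟨s, hs, by rw [← mul_assoc, h, zero_mul]⟩
  -- `a` is closed under left multiplication (uses Ore)
  have Ra : ∀ x r : R, (∃ s ∈ S, s * x = 0) → ∃ s ∈ S, s * (r * x) = 0 := by
    rintro x r ⟨s, hs, h⟩
    obtain ⟨s', hs', r', he⟩ := hOre r s hs
    exact ⟨s', hs', by rw [← mul_assoc, he, mul_assoc, h, mul_zero]⟩
  -- `a` is closed under addition
  have aadd : ∀ x y : R, (∃ s ∈ S, s * x = 0) → (∃ s ∈ S, s * y = 0) →
      ∃ s ∈ S, s * (x + y) = 0 := by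
    rintro x y ⟨s, hs, hx⟩ ⟨t, ht, hy⟩
    obtain ⟨t', ht', r', he⟩ := hOre t s hs
    refine ⟨t' * t, hmul t' ht' t ht, ?_⟩
    have h1 : t' * t * x = 0 := by rw [he, mul_assoc, hx, mul_zero]
    have h2 : t' * t * y = 0 := by rw [mul_assoc, hy, mul_zero]
    rw [mul_add, h1, h2, add_zero]
  -- S ⊆ T
  have hST : ∀ s ∈ S, s ∈ {x : R | ∃ s ∈ S, ∃ y ∈ {r : R | ∃ u ∈ S, u * r = 0}, x = s + y} := by
    intro s hs
    exact ⟨s, hs, 0, ⟨1, hone, mul_zero 1⟩, (add_zero s).symm⟩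
  refine ⟨hST 1 hone, ?_, ?_, ?_, ?_, ?_⟩
  · -- multiplicative
    rintro u ⟨s, hs, y, hy, rfl⟩ v ⟨t, ht, z, hz, rfl⟩
    refine ⟨s * t, hmul s hs t ht, s * z + (y * t + y * z), ?_, by noncomm_ring⟩
    exact aadd _ _ (Ra z s hz) (aadd _ _ (aR y t hy) (aR y z hy))
  · -- 0 ∉ T
    rintro ⟨s, hs, y, ⟨p, hp, hpy⟩, h0⟩
    have hs0 : p * s = 0 := by
      have : s = -y := eq_neg_of_add_eq_zero_left h0.symm
      rw [this, mul_neg, hpy, neg_zero]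
    exact hzero (hs0 ▸ hmul p hp s hs)
  · -- Ore condition
    rintro r t ⟨s, hs, y, ⟨p, hp, hpy⟩, rfl⟩
    obtain ⟨s', hs', r', h⟩ := hOre r (p * s) (hmul p hp s hs)
    refine ⟨s', hST s' hs', r' * p, ?_⟩
    rw [h, mul_assoc r' p, mul_add p s y, hpy, add_zero]
  · -- denominator condition
    rintro r t ⟨s, hs, y, hy, rfl⟩ h
    obtain ⟨w, hw, hw0⟩ := Ra y r hy
    have hws : (w * r) * s = 0 := by
      have h1 : r * s + r * y = 0 := by rw [← mul_add, h]
      have : r * s = -(r * y) := eq_neg_of_add_eq_zero_left h1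
      rw [mul_assoc, this, mul_neg, hw0, neg_zero]
    obtain ⟨t', ht', ht0⟩ := hden (w * r) s hs hws
    exact ⟨t' * w, hST _ (hmul t' ht' w hw), by rw [mul_assoc, ht0]⟩
  · -- ass(T) = a
    ext r
    constructor
    · rintro ⟨t, ⟨s, hs, y, ⟨p, hp, hpy⟩, rfl⟩, htr⟩
      refine ⟨p * s, hmul p hp s hs, ?_⟩
      have : p * ((s + y) * r) = 0 := by rw [htr, mul_zero]
      calc p * s * r = p * ((s + y) * r) - (p * y) * r := by noncomm_ring
        _ = 0 := by rw [this, hpy, zero_mul, zero_sub, neg_zero]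
    · rintro ⟨s, hs, h⟩
      exact ⟨s, hST s hs, h⟩
end

section
/- Let R be a subring of a ring R' and let S be a multiplicative set of R such that for each r' ∈ R' there exists s ∈ S with s·r' ∈ R (i.e. the left R-module R'/R is S-torsion). If S is a left Ore set of R' with ass_{l,R'}(S) = a' (an ideal of R'), then S is a left Ore set of R with ass_{l,R}(S) = R ∩ a'. -/
/-- Let `R` be a subring of a ring `R'` and let `S ⊆ R` be a
multiplicative set such that for each `r' ∈ R'` there exists `s ∈ S` with `s * r' ∈ R`
(the left `R`-module `R'/R` is `S`-torsion).  If `S` is a left Ore set of `R'` with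
`ass_{l,R'}(S) = a'`, then `S` is a left Ore set of `R` with
`ass_{l,R}(S) = R ∩ a'`. -/
theorem stmt15 {R' : Type*} [Ring R'] (R : Subring R') (S : Set R')
    (hSR : S ⊆ (R : Set R'))
    (hone : (1 : R') ∈ S) (hmul : ∀ a ∈ S, ∀ b ∈ S, a * b ∈ S) (hzero : (0 : R') ∉ S)
    (htors : ∀ r' : R', ∃ s ∈ S, s * r' ∈ R)
    (hOre : ∀ r : R', ∀ s ∈ S, ∃ s' ∈ S, ∃ r'' : R', s' * r = r'' * s)
    (a' : Set R') (ha' : a' = {r : R' | ∃ s ∈ S, s * r = 0}) :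
    (∀ r ∈ (R : Set R'), ∀ s ∈ S,
      ∃ s' ∈ S, ∃ r'' ∈ (R : Set R'), s' * r = r'' * s) ∧
    {r : R' | r ∈ R ∧ ∃ s ∈ S, s * r = 0} = (R : Set R') ∩ a' := by
  constructor
  · intro r hr s hs
    obtain ⟨s', hs', r'', heq⟩ := hOre r s hs
    obtain ⟨t, ht, htr⟩ := htors r''
    refine ⟨t * s', hmul t ht s' hs', t * r'', htr, ?_⟩
    rw [mul_assoc, heq, mul_assoc]
  · ext r
    simp [ha']
end

section
/- Let R be a subring of a ring R' and let S be a multiplicative set of R such that for each r' ∈ R' there exists s ∈ S with s·r' ∈ R (i.e. the left R-module R'/R is S-torsion). If S is a left denominator set of R' with ass_{l,R'}(S) = a' (an ideal of R'), then S is a left denominator set of R with ass_{l,R}(S) = R ∩ a'. -/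
/-- Let `R` be a subring of a ring `R'` and let `S ⊆ R` be a
multiplicative set such that for each `r' ∈ R'` there exists `s ∈ S` with `s * r' ∈ R`
(the left `R`-module `R'/R` is `S`-torsion).  If `S` is a left denominator set of `R'`
with `ass_{l,R'}(S) = a'`, then `S` is a left denominator set of `R` with
`ass_{l,R}(S) = R ∩ a'`. -/
theorem stmt16 {R' : Type*} [Ring R'] (R : Subring R') (S : Set R')
    (hSR : S ⊆ (R : Set R'))
    (hone : (1 : R') ∈ S) (hmul : ∀ a ∈ S, ∀ b ∈ S, a * b ∈ S) (hzero : (0 : R') ∉ S)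
    (htors : ∀ r' : R', ∃ s ∈ S, s * r' ∈ R)
    (hOre : ∀ r : R', ∀ s ∈ S, ∃ s' ∈ S, ∃ r'' : R', s' * r = r'' * s)
    (hden : ∀ r : R', ∀ s ∈ S, r * s = 0 → ∃ t ∈ S, t * r = 0)
    (a' : Set R') (ha' : a' = {r : R' | ∃ s ∈ S, s * r = 0}) :
    (∀ r ∈ (R : Set R'), ∀ s ∈ S,
      ∃ s' ∈ S, ∃ r'' ∈ (R : Set R'), s' * r = r'' * s) ∧
    (∀ r ∈ (R : Set R'), ∀ s ∈ S, r * s = 0 → ∃ t ∈ S, t * r = 0) ∧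
    {r : R' | r ∈ R ∧ ∃ s ∈ S, s * r = 0} = (R : Set R') ∩ a' := by
  refine ⟨?_, ?_, ?_⟩
  · intro r _ s hs
    obtain ⟨s', hs', r'', heq⟩ := hOre r s hs
    obtain ⟨t, ht, htr⟩ := htors r''
    refine ⟨t * s', hmul t ht s' hs', t * r'', htr, ?_⟩
    rw [mul_assoc, heq, mul_assoc]
  · intro r _ s hs h
    exact hden r s hs h
  · ext r
    simp [ha', and_comm]
end
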